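/- For n even, n ≥ 4, and 3 ≤ t ≤ n−1, the perfect matching graph (disjoint union of n/2 edges) satisfies i_t = C(n/2, t)·2^t < C(n-1, t). -/

import Mathlib

/-- A finset of vertices is independent: no edge inside. -/
def SimpleGraph.IsIndepFinset {V : Type*} (G : SimpleGraph V) (s : Finset V) : Prop :=
  ∀ v ∈ s, ∀ w ∈ s, ¬ G.Adj v w

/-- `indepCount G t` = number of independent sets of size `t` in `G`. -/
noncomputable def indepCount {V : Type*} [Fintype V] (G : SimpleGraph V) (t : ℕ) : ℕ :=
  Nat.card {s : Finset V // s.card = t ∧ G.IsIndepFinset s}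

/-- `indepTotal G` = total number of independent sets in `G` (including ∅). -/
noncomputable def indepTotal {V : Type*} [Fintype V] (G : SimpleGraph V) : ℕ :=
  Nat.card {s : Finset V // G.IsIndepFinset s}

open Classical in
/-- The independence polynomial `P(G,x) = Σ_t i_t(G) xᵗ`. -/
noncomputable def indPoly {V : Type*} [Fintype V] (G : SimpleGraph V) (x : ℝ) : ℝ :=
  ∑ s ∈ Finset.univ.filter (fun s : Finset V => G.IsIndepFinset s), x ^ s.card

lemma desc3 (a : ℕ) : (a+2).choose 3 * 6 = (a+2)*(a+1)*a := by
  have h := Nat.descFactorial_eq_factorial_mul_choose (a+2) 3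
  simp [Nat.descFactorial_succ, Nat.factorial] at h
  nlinarith [h]

lemma pm_base (m : ℕ) (hm : 3 ≤ m) : m.choose 3 * 2 ^ 3 < (2 * m - 1).choose 3 := by
  obtain ⟨k, rfl⟩ := Nat.exists_eq_add_of_le hm
  have h1 := desc3 (1+k)
  have e : 2 * (3+k) - 1 = (3+2*k) + 2 := by omega
  have h2 := desc3 (3+2*k)
  rw [e]
  have e1 : (1+k)+2 = 3+k := by omega
  rw [e1] at h1
  have : (3+k).choose 3 * 2^3 * 6 < ((3+2*k)+2).choose 3 * 6 := by
    rw [h2]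
    calc (3+k).choose 3 * 2^3 * 6 = ((3+k).choose 3 * 6) * 8 := by ring
    _ = (3+k)*(1+k+1)*(1+k)*8 := by rw [h1]
    _ < (3+2*k+2) * (3+2*k+1) * (3+2*k) := by nlinarith
  omega

lemma pm_ineq (m t : ℕ) (hm : 2 ≤ m) (ht : 3 ≤ t) (ht' : t ≤ 2 * m - 1) :
    m.choose t * 2 ^ t < (2 * m - 1).choose t := by
  revert ht'
  induction t, ht using Nat.le_induction with
  | base =>
    intro _
    rcases lt_or_ge m 3 with h | h
    · interval_cases m
      decide
    · exact pm_base m h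
  | succ t ht ih =>
    intro ht'
    rcases lt_or_ge m (t+1) with h | h
    · rw [Nat.choose_eq_zero_of_lt h]
      simpa using Nat.choose_pos (by omega : t + 1 ≤ 2*m-1)
    · have ih' := ih (by omega)
      have key : m.choose (t+1) * 2^(t+1) * (t+1) < (2*m-1).choose (t+1) * (t+1) := by
        have e1 : m.choose (t+1) * 2^(t+1) * (t+1) = m.choose t * 2^t * (2*(m - t)) := by
          have h3 := Nat.choose_succ_right_eq m t
          calc m.choose (t+1) * 2^(t+1) * (t+1) = (m.choose (t+1) * (t+1)) * (2^t * 2) := by ring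
          _ = (m.choose t * (m - t)) * (2^t * 2) := by rw [h3]
          _ = m.choose t * 2^t * (2*(m-t)) := by ring
        have e2 : (2*m-1).choose (t+1) * (t+1) = (2*m-1).choose t * (2*m-1-t) := by
          rw [Nat.choose_succ_right_eq]
        rw [e1, e2]
        calc m.choose t * 2^t * (2*(m-t)) ≤ m.choose t * 2^t * (2*m-1-t) :=
          Nat.mul_le_mul_left _ (by omega)
        _ < (2*m-1).choose t * (2*m-1-t) := by
          apply Nat.mul_lt_mul_of_lt_of_le ih' (le_refl _) (by omega)
      exact Nat.lt_of_mul_lt_mul_right key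

open Finset in
lemma pm_count (m t : ℕ) (M : SimpleGraph (Fin m × Bool))
    (hM : ∀ u v, M.Adj u v ↔ u.1 = v.1 ∧ u ≠ v) :
    indepCount M t = m.choose t * 2 ^ t := by
  classical
  have hind : ∀ s : Finset (Fin m × Bool), M.IsIndepFinset s ↔
      ∀ u ∈ s, ∀ v ∈ s, u.1 = v.1 → u = v := by
    intro s
    constructor
    · intro h u hu v hv he
      by_contra hne
      exact h u hu v hv ((hM u v).2 ⟨he, hne⟩)
    · intro h u hu v hv hadj
      obtain ⟨he, hne⟩ := (hM u v).1 hadj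
      exact hne (h u hu v hv he)
  rw [indepCount, Nat.card_eq_fintype_card, Fintype.card_subtype]
  set F : Finset (Finset (Fin m × Bool)) :=
    {s : Finset (Fin m × Bool) | s.card = t ∧ M.IsIndepFinset s} with hF
  have hmaps : ∀ s ∈ F, s.image Prod.fst ∈ Finset.univ.powersetCard t := by
    intro s hs
    rw [hF, mem_filter] at hs
    rw [mem_powersetCard]
    refine ⟨subset_univ _, ?_⟩
    rw [card_image_of_injOn, hs.2.1]
    intro u hu v hv he
    exact (hind s).1 hs.2.2 u hu v hv he
  rw [Finset.card_eq_sum_card_fiberwise hmaps]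
  have hfib : ∀ A ∈ Finset.univ.powersetCard t,
      #{s ∈ F | s.image Prod.fst = A} = 2 ^ t := by
    intro A hA
    have hAt : A.card = t := (mem_powersetCard.1 hA).2
    have : #{s ∈ F | s.image Prod.fst = A} = #(Finset.univ : Finset (↥A → Bool)) := by
      apply Finset.card_bij' (i := fun s _ => fun a : ↥A => decide ((a.1, true) ∈ s))
        (j := fun f _ => A.attach.map
          ⟨fun a => (a.1, f a), fun a b h => Subtype.ext (congrArg Prod.fst h)⟩)
      · intro s _
        exact Finset.mem_univ _
      · intro f _
        simp only [mem_filter, hF, mem_coe, Finset.mem_filter, Finset.mem_univ, true_and]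
        have hmem : ∀ x : Fin m × Bool, (x ∈ A.attach.map
            ⟨fun a => (a.1, f a), fun a b h => Subtype.ext (congrArg Prod.fst h)⟩)
            ↔ ∃ c : ↥A, (c.1, f c) = x := by
          intro x
          simp [Finset.mem_map]; exact Iff.rfl
        refine ⟨⟨?_, ?_⟩, ?_⟩
        · rw [card_map, card_attach, hAt]
        · rw [hind]
          intro u hu v hv he
          obtain ⟨c, hc⟩ := (hmem u).1 hu
          obtain ⟨d, hd⟩ := (hmem v).1 hv
          have : c = d := by
            apply Subtype.ext
            rw [← hc, ← hd] at he
            exact he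
          rw [← hc, ← hd, this]
        · ext x
          simp only [Finset.mem_image]
          constructor
          · rintro ⟨y, hy, rfl⟩
            obtain ⟨c, hc⟩ := (hmem y).1 hy
            rw [← hc]
            exact c.2
          · intro hx
            exact ⟨(x, f ⟨x, hx⟩), (hmem _).2 ⟨⟨x, hx⟩, rfl⟩, rfl⟩
      · -- left inverse : j (i s) = s
        intro s hs
        simp only [mem_filter, hF, Finset.mem_filter, Finset.mem_univ, true_and] at hs
        obtain ⟨⟨hcard, hindep⟩, himg⟩ := hs
        have hinj := (hind s).1 hindep
        ext ⟨a, b⟩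
        simp only [Finset.mem_map, Finset.mem_attach, Function.Embedding.coeFn_mk, true_and]
        constructor
        · rintro ⟨c, hc⟩
          have ha : a = (c : Fin m) := (congrArg Prod.fst hc).symm
          have hb : b = decide (((c : Fin m), true) ∈ s) := (congrArg Prod.snd hc).symm
          subst ha
          subst hb
          by_cases htr : ((c : Fin m), true) ∈ s
          · simpa [htr] using htr
          · have hcA : (c : Fin m) ∈ Finset.image Prod.fst s := by
              rw [himg]; exact c.2
            obtain ⟨⟨a', b'⟩, hy, hy1⟩ := Finset.mem_image.1 hcA
            simp only at hy1
            subst hy1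
            have hb' : b' = false := by
              cases b' with
              | true => exact absurd hy htr
              | false => rfl
            rw [hb'] at hy
            simpa [htr] using hy
        · intro hab
          have haA : a ∈ A := by
            rw [← himg]
            exact Finset.mem_image.2 ⟨(a, b), hab, rfl⟩
          refine ⟨⟨a, haA⟩, ?_⟩
          show (a, _) = (a, b)
          congr 1
          cases b with
          | true => simpa using hab
          | false =>
            simp only [decide_eq_false_iff_not]
            intro htr
            have := hinj (a, true) htr (a, false) hab rfl
            simp at this
      · -- right inverse : i (j f) = f
        intro f _
        funext a
        have hmem : (((a : Fin m), true) ∈ A.attach.map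
            ⟨fun a => (a.1, f a), fun a b h => Subtype.ext (congrArg Prod.fst h)⟩)
            ↔ f a = true := by
          simp only [Finset.mem_map, Finset.mem_attach, Function.Embedding.coeFn_mk, true_and]
          constructor
          · rintro ⟨c, hc⟩
            have : c = a := Subtype.ext (congrArg Prod.fst hc)
            rw [this] at hc
            exact congrArg Prod.snd hc
          · intro hfa
            exact ⟨a, by rw [← hfa]; rfl⟩
        cases hfa : f a with
        | true => simpa [hfa] using hmem.2 hfa
        | false =>
          simp only [decide_eq_false_iff_not]
          intro h
          rw [hmem.1 h] at hfa
          exact Bool.true_eq_false.mp hfa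
    rw [this, Finset.card_univ, Fintype.card_fun, Fintype.card_coe, hAt]
    simp
  rw [Finset.sum_congr rfl hfib, Finset.sum_const, Finset.card_powersetCard, Finset.card_univ,
    Fintype.card_fin, smul_eq_mul]

theorem perfect_matching_indep_count (n t : ℕ) (hn : 4 ≤ n) (he : Even n)
    (ht : 3 ≤ t) (ht' : t ≤ n - 1)
    (M : SimpleGraph (Fin (n / 2) × Bool))
    (hM : ∀ u v, M.Adj u v ↔ u.1 = v.1 ∧ u ≠ v) :
    indepCount M t = (n / 2).choose t * 2 ^ t ∧
      (n / 2).choose t * 2 ^ t < (n - 1).choose t := by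
  obtain ⟨m, hm⟩ := he
  have hn2 : n / 2 = m := by omega
  have hmn : n = 2 * (n / 2) := by omega
  refine ⟨pm_count (n / 2) t M hM, ?_⟩
  have := pm_ineq (n / 2) t (by omega) ht (by omega)
  have e : 2 * (n / 2) - 1 = n - 1 := by omega
  rwa [e] at this
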